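/- Let G and H be nontrivial connected graphs. Every connected cycle convex set S in the Cartesian product G □ H is a sub-product, i.e., S = π_G(S) × π_H(S), where π_G and π_H are the projections onto the factors. -/

import Mathlib

open SimpleGraph

variable {V α β : Type*}

/-- A set `S` is cycle convex in `G` if no vertex outside `S` lies on a cycle in the
subgraph induced by `S ∪ {w}`. -/
def CycleConvex (G : SimpleGraph V) (S : Set V) : Prop :=
  ∀ w : V, w ∉ S →
    ∀ c : (G.induce (insert w S)).Walk ⟨w, Set.mem_insert w S⟩ ⟨w, Set.mem_insert w S⟩,
      ¬ c.IsCycle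

/-- The cycle convex hull of `S`: the smallest cycle convex set containing `S`. -/
def cycleHull (G : SimpleGraph V) (S : Set V) : Set V :=
  ⋂₀ {T : Set V | S ⊆ T ∧ CycleConvex G T}

/-- The cycle hull number: minimum size of a set whose cycle convex hull is everything. -/
noncomputable def cycleHullNumber (G : SimpleGraph V) : ℕ :=
  sInf {n : ℕ | ∃ S : Set V, S.ncard = n ∧ cycleHull G S = Set.univ}

/-- The cycle convexity number: maximum size of a proper cycle convex set. -/
noncomputable def cycleConvexityNumber (G : SimpleGraph V) : ℕ :=
  sSup {n : ℕ | ∃ S : Set V, S.ncard = n ∧ CycleConvex G S ∧ S ≠ Set.univ}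

/-- The independence number of a graph. -/
noncomputable def indepNumber (G : SimpleGraph V) : ℕ :=
  sSup {n : ℕ | ∃ S : Set V, S.ncard = n ∧ S.Pairwise fun a b => ¬ G.Adj a b}

/-- The strong product of two simple graphs. -/
def strongProd (G : SimpleGraph α) (H : SimpleGraph β) : SimpleGraph (α × β) where
  Adj x y := (G.Adj x.1 y.1 ∧ x.2 = y.2) ∨ (x.1 = y.1 ∧ H.Adj x.2 y.2) ∨
    (G.Adj x.1 y.1 ∧ H.Adj x.2 y.2)
  symm := ⟨fun x y h => by
    rcases h with ⟨h1, h2⟩ | ⟨h1, h2⟩ | ⟨h1, h2⟩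
    · exact Or.inl ⟨h1.symm, h2.symm⟩
    · exact Or.inr (Or.inl ⟨h1.symm, h2.symm⟩)
    · exact Or.inr (Or.inr ⟨h1.symm, h2.symm⟩)⟩
  loopless := ⟨fun x h => by
    rcases h with ⟨h1, _⟩ | ⟨_, h2⟩ | ⟨h1, _⟩
    · exact G.loopless.irrefl _ h1
    · exact H.loopless.irrefl _ h2
    · exact G.loopless.irrefl _ h1⟩

/-- The lexicographic product of two simple graphs. -/
def lexProd (G : SimpleGraph α) (H : SimpleGraph β) : SimpleGraph (α × β) where
  Adj x y := G.Adj x.1 y.1 ∨ (x.1 = y.1 ∧ H.Adj x.2 y.2)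
  symm := ⟨fun x y h => by
    rcases h with h1 | ⟨h1, h2⟩
    · exact Or.inl h1.symm
    · exact Or.inr ⟨h1.symm, h2.symm⟩⟩
  loopless := ⟨fun x h => by
    rcases h with h1 | ⟨_, h2⟩
    · exact G.loopless.irrefl _ h1
    · exact H.loopless.irrefl _ h2⟩

lemma isPath_concat {V : Type*} {G : SimpleGraph V} {u v w : V} {p : G.Walk u v}
    (hp : p.IsPath) (h : G.Adj v w) (hw : w ∉ p.support) : (p.concat h).IsPath := by
  rw [Walk.isPath_def, Walk.support_concat]
  rw [List.nodup_append]
  exact ⟨hp.support_nodup, List.nodup_singleton _, by simpa using fun (a : V) (ha : a ∈ p.support) (h : a = w) => hw (h ▸ ha)⟩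

lemma two_nbrs {V : Type*} {Γ : SimpleGraph V} {S : Set V} {w u v : V}
    (hw : w ∉ S) (hu : u ∈ S) (hv : v ∈ S) (huv : u ≠ v)
    (hwu : Γ.Adj w u) (hwv : Γ.Adj w v)
    (hr : (Γ.induce S).Reachable ⟨u, hu⟩ ⟨v, hv⟩)
    (hconv : CycleConvex Γ S) : False := by
  classical
  obtain ⟨p0⟩ := hr
  obtain ⟨p, hp⟩ := p0.toPath
  let f : Γ.induce S →g Γ.induce (insert w S) :=
    { toFun := fun x => ⟨x.1, Set.mem_insert_of_mem _ x.2⟩,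
      map_rel' := fun hab => hab }
  have hf : Function.Injective f := by
    intro a b h
    exact Subtype.ext (congrArg (fun z : ↥(insert w S) => z.1) h :)
  let pm := p.map f
  have hpm : pm.IsPath := Walk.map_isPath_of_injective hf hp
  have hwadj_u : (Γ.induce (insert w S)).Adj ⟨w, Set.mem_insert w S⟩
      ⟨u, Set.mem_insert_of_mem _ hu⟩ := hwu
  have hadj_vw : (Γ.induce (insert w S)).Adj ⟨v, Set.mem_insert_of_mem _ hv⟩
      ⟨w, Set.mem_insert w S⟩ := hwv.symm
  have hwsupp : (⟨w, Set.mem_insert w S⟩ : ↥(insert w S)) ∉ pm.support := by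
    intro hmem
    rw [Walk.support_map, List.mem_map] at hmem
    obtain ⟨x, _, hx⟩ := hmem
    have : x.1 = w := congrArg Subtype.val hx
    exact hw (this ▸ x.2)
  have hpath : (pm.concat hadj_vw).IsPath := isPath_concat hpm hadj_vw hwsupp
  have hedge : ¬ s(⟨w, Set.mem_insert w S⟩, ⟨u, Set.mem_insert_of_mem _ hu⟩)
      ∈ (pm.concat hadj_vw).edges := by
    rw [Walk.edges_concat, List.concat_eq_append, List.mem_append]
    rintro (h1 | h1)
    · exact hwsupp (Walk.fst_mem_support_of_mem_edges pm h1)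
    · rw [List.mem_singleton] at h1
      rw [Sym2.eq_iff] at h1
      rcases h1 with ⟨h2, _⟩ | ⟨_, h3⟩
      · have hwv' : w = v := congrArg Subtype.val h2
        exact hw (hwv' ▸ hv)
      · have huv' : u = v := congrArg Subtype.val h3
        exact huv huv'
  exact hconv w hw (Walk.cons hwadj_u (pm.concat hadj_vw))
    ((Walk.cons_isCycle_iff _ _).mpr ⟨hpath, hedge⟩)

theorem stmt_2 [Fintype α] [Fintype β] (G : SimpleGraph α) (H : SimpleGraph β)
    [Nontrivial α] [Nontrivial β] (hG : G.Connected) (hH : H.Connected)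
    (S : Set (α × β)) (hconv : CycleConvex (G □ H) S)
    (hSconn : ((G □ H).induce S).Connected) :
    S = (Prod.fst '' S) ×ˢ (Prod.snd '' S) := by
  classical
  ext ⟨a, b⟩
  simp only [Set.mem_prod, Set.mem_image, Prod.exists]
  constructor
  · intro h
    exact ⟨⟨a, b, h, rfl⟩, ⟨a, b, h, rfl⟩⟩
  · rintro ⟨⟨a', y, huS, h1⟩, ⟨x', b', hvS, h2⟩⟩
    subst h1
    subst h2
    by_contra hab
    set N : Set ℕ := {n | ∃ (c : α) (d : β) (y : β) (x : α) (hu : (c, y) ∈ S)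
      (hv : (x, d) ∈ S), (c, d) ∉ S ∧
      ∃ p : ((G □ H).induce S).Walk ⟨(c, y), hu⟩ ⟨(x, d), hv⟩, p.length = n} with hN
    have hNne : N.Nonempty := by
      obtain ⟨p0⟩ := hSconn.preconnected ⟨(a', y), huS⟩ ⟨(x', b'), hvS⟩
      exact ⟨p0.length, a', b', y, x', huS, hvS, hab, p0, rfl⟩
    obtain ⟨c, d, y0, x0, hu, hv, hcd, p, hlen⟩ := Nat.sInf_mem hNne
    -- p has positive length
    have hn0 : p.length ≠ 0 := by
      intro h0
      have heq := Walk.eq_of_length_eq_zero h0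
      have h' : ((c, y0) : α × β) = (x0, d) := congrArg Subtype.val heq
      rw [Prod.mk.injEq] at h'
      exact hcd (h'.2 ▸ hu)
    -- first edge is a G-edge, and (a1, d) ∈ S
    have hfirst : ∃ a1, G.Adj c a1 ∧ (a1, d) ∈ S := by
      have hnn : ¬ p.Nil := by
        rw [Walk.not_nil_iff_lt_length]; omega
      obtain ⟨m, h, q, hpq⟩ := Walk.not_nil_iff.mp hnn
      obtain ⟨⟨a1, y1⟩, hm⟩ := m
      have hql : q.length + 1 = p.length := by
        rw [hpq, Walk.length_cons]
      have hadj : (G □ H).Adj (c, y0) (a1, y1) := h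
      rcases boxProd_adj.mp hadj with ⟨hGadj, hyy⟩ | ⟨hHadj, hcc⟩
      · dsimp at hyy
        subst hyy
        refine ⟨a1, hGadj, ?_⟩
        by_contra hbad
        have hmem : q.length ∈ N := ⟨a1, d, y0, x0, hm, hv, hbad, q, rfl⟩
        have := Nat.sInf_le hmem
        omega
      · dsimp at hcc
        subst hcc
        exfalso
        have hmem : q.length ∈ N := ⟨c, d, y1, x0, hm, hv, hcd, q, rfl⟩
        have := Nat.sInf_le hmem
        omega
    -- last edge is an H-edge, and (c, b1) ∈ S
    have hlast : ∃ b1, H.Adj d b1 ∧ (c, b1) ∈ S := by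
      have hnn : ¬ p.reverse.Nil := by
        rw [Walk.not_nil_iff_lt_length, Walk.length_reverse]; omega
      obtain ⟨m, h, q, hpq⟩ := Walk.not_nil_iff.mp hnn
      obtain ⟨⟨x1, b1⟩, hm⟩ := m
      have hql : q.length + 1 = p.length := by
        have := congrArg Walk.length hpq
        rw [Walk.length_reverse, Walk.length_cons] at this
        omega
      have hadj : (G □ H).Adj (x0, d) (x1, b1) := h
      rcases boxProd_adj.mp hadj with ⟨hGadj, hdd⟩ | ⟨hHadj, hxx⟩
      · dsimp at hdd
        subst hdd
        exfalso
        have hmem : q.reverse.length ∈ N :=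
          ⟨c, d, y0, x1, hu, hm, hcd, q.reverse, rfl⟩
        have := Nat.sInf_le hmem
        rw [Walk.length_reverse] at this
        omega
      · dsimp at hxx
        subst hxx
        refine ⟨b1, hHadj, ?_⟩
        by_contra hbad
        have hmem : q.reverse.length ∈ N :=
          ⟨c, b1, y0, x0, hu, hm, hbad, q.reverse, rfl⟩
        have := Nat.sInf_le hmem
        rw [Walk.length_reverse] at this
        omega
    obtain ⟨a1, hGa, hS1⟩ := hfirst
    obtain ⟨b1, hHb, hS2⟩ := hlast
    have hne : ((a1, d) : α × β) ≠ (c, b1) := by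
      intro h
      rw [Prod.mk.injEq] at h
      exact hGa.ne' h.1
    have hadj1 : (G □ H).Adj (c, d) (a1, d) := boxProd_adj.mpr (Or.inl ⟨hGa, rfl⟩)
    have hadj2 : (G □ H).Adj (c, d) (c, b1) := boxProd_adj.mpr (Or.inr ⟨hHb, rfl⟩)
    exact two_nbrs hcd hS1 hS2 hne hadj1 hadj2
      (hSconn.preconnected ⟨(a1, d), hS1⟩ ⟨(c, b1), hS2⟩) hconv
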